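/- If f_Σ and f_{Σ'} lie in the same G_χ-orbit on V for segmentations Σ and Σ' of Ω, then Σ and Σ' have the same χ-flavored multisegment. -/

import Mathlib

open Matrix

noncomputable section

/-- The indexing set `Ω = {(i,j) : 1 ≤ i ≤ m, 1 ≤ j ≤ v_i}` for the standard basis vectors of
`⊕ ℂ^{v_i}`; levels are indexed by `Fin (m'+1)` (so `m = m'+1`) and `d` is the dimension
vector (with `d (Fin.last m') = n`). -/
abbrev QOmega (m' : ℕ) (d : Fin (m' + 1) → ℕ) := Σ i : Fin (m' + 1), Fin (d i)

/-- A point of `V = ⊕_{i=1}^{m-1} Hom(ℂ^{v_i}, ℂ^{v_{i+1}})`, as a family of matrices. -/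
abbrev QRep (m' : ℕ) (d : Fin (m' + 1) → ℕ) :=
  ∀ i : Fin m', Matrix (Fin (d i.succ)) (Fin (d i.castSucc)) ℂ

/-- An element of `GL_{v_1} × ⋯ × GL_{v_{m-1}} × GL_n`. -/
abbrev QGroup (m' : ℕ) (d : Fin (m' + 1) → ℕ) := ∀ i : Fin (m' + 1), GL (Fin (d i)) ℂ

/-- The base-change action of the group on the space of quiver representations. -/
def qAct {m' : ℕ} {d : Fin (m' + 1) → ℕ} (g : QGroup m' d) (f : QRep m' d) : QRep m' d :=
  fun i => ((g i.succ : Matrix (Fin (d i.succ)) (Fin (d i.succ)) ℂ)) * f i *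
    (((g i.castSucc)⁻¹ : GL (Fin (d i.castSucc)) ℂ) : Matrix _ _ ℂ)

/-- Membership in the parabolic `P_χ ⊆ GL_n`: the entries `g_{kl}` with `χ_k > χ_l` vanish. -/
def InParabolic {N : ℕ} (χ : Fin N → ℤ) (A : Matrix (Fin N) (Fin N) ℂ) : Prop :=
  ∀ k l : Fin N, χ l < χ k → A k l = 0

/-- The set of levels occurring in a subset `S ⊆ Ω`. -/
def levelsOf {m' : ℕ} {d : Fin (m' + 1) → ℕ} (S : Set (QOmega m' d)) : Set (Fin (m' + 1)) :=
  {i | ∃ j : Fin (d i), (⟨i, j⟩ : QOmega m' d) ∈ S}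

/-- A subsegment of `Ω`: a set of the form `{(k,j_k),(k+1,j_{k+1}),…,(ℓ,j_ℓ)}`, i.e. a
nonempty subset with at most one element at each level whose set of levels is an interval. -/
def IsSubsegment {m' : ℕ} {d : Fin (m' + 1) → ℕ} (S : Set (QOmega m' d)) : Prop :=
  S.Nonempty ∧
  (∀ (i : Fin (m' + 1)) (j j' : Fin (d i)),
    (⟨i, j⟩ : QOmega m' d) ∈ S → (⟨i, j'⟩ : QOmega m' d) ∈ S → j = j') ∧
  (∀ i₁ i₂ i₃ : Fin (m' + 1), i₁ ∈ levelsOf S → i₂ ∈ levelsOf S →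
    i₁ ≤ i₃ → i₃ ≤ i₂ → i₃ ∈ levelsOf S)

/-- A segmentation of `Ω`: a partition of `Ω` into subsegments. -/
def IsSegmentation {m' : ℕ} {d : Fin (m' + 1) → ℕ} (P : Set (Set (QOmega m' d))) : Prop :=
  (∀ S ∈ P, IsSubsegment S) ∧ ∀ x : QOmega m' d, ∃! S, S ∈ P ∧ x ∈ S

open Classical in
/-- The quiver representation `f_Σ` attached to a segmentation: `f(b_{i,j}) = b_{i+1,j'}` if
`(i,j)` and `(i+1,j')` lie in a common subsegment, and `f(b_{i,j}) = 0` otherwise. -/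
def segRep {m' : ℕ} {d : Fin (m' + 1) → ℕ} (P : Set (Set (QOmega m' d))) : QRep m' d :=
  fun i => Matrix.of fun j' j =>
    if ∃ S ∈ P, (⟨i.castSucc, j⟩ : QOmega m' d) ∈ S ∧ (⟨i.succ, j'⟩ : QOmega m' d) ∈ S
    then (1 : ℂ) else 0

/-- Two segmentations define the same `χ`-flavored multisegment: there is a bijection between
their subsegments matching the underlying segments, and matching subsegments ending at the top
level only when the corresponding flavors (entries of `χ`) agree. -/
def SameMultisegment {m' : ℕ} {d : Fin (m' + 1) → ℕ} (χ : Fin (d (Fin.last m')) → ℤ)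
    (P P' : Set (Set (QOmega m' d))) : Prop :=
  ∃ φ : P ≃ P', ∀ S : P,
    levelsOf (S : Set (QOmega m' d)) = levelsOf ((φ S : Set (QOmega m' d))) ∧
    ∀ j j' : Fin (d (Fin.last m')),
      (⟨Fin.last m', j⟩ : QOmega m' d) ∈ (S : Set (QOmega m' d)) →
      (⟨Fin.last m', j'⟩ : QOmega m' d) ∈ ((φ S : Set (QOmega m' d))) → χ j = χ j'

/-- `f` and `f'` lie in the same `G_χ = P_χ × G_0` orbit. -/
def SameOrbit {m' : ℕ} {d : Fin (m' + 1) → ℕ} (χ : Fin (d (Fin.last m')) → ℤ)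
    (f f' : QRep m' d) : Prop :=
  ∃ g : QGroup m' d,
    InParabolic χ ((g (Fin.last m') : Matrix (Fin (d (Fin.last m'))) (Fin (d (Fin.last m'))) ℂ)) ∧
    qAct g f = f'

/-! ### Auxiliary lemmas: rank of partial permutation matrices -/

open Classical in
/-- Rank of a 0/1 matrix with at most one nonzero entry in each row and column. -/
lemma rank_partial_perm {p q : ℕ} (M : Matrix (Fin p) (Fin q) ℂ)
    (h01 : ∀ i j, M i j = 0 ∨ M i j = 1)
    (hrow : ∀ i j₁ j₂, M i j₁ ≠ 0 → M i j₂ ≠ 0 → j₁ = j₂)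
    (hcol : ∀ i₁ i₂ j, M i₁ j ≠ 0 → M i₂ j ≠ 0 → i₁ = i₂) :
    M.rank = Nat.card {j // ∃ i, M i j ≠ 0} := by
  classical
  set w : Fin q → ℂ := fun j => if ∃ i, M i j ≠ 0 then 1 else 0 with hw
  have hD : Mᵀ * M = diagonal w := by
    ext j₁ j₂
    simp only [Matrix.mul_apply, Matrix.transpose_apply]
    by_cases h : j₁ = j₂
    · subst h
      rw [Matrix.diagonal_apply_eq]
      by_cases he : ∃ i, M i j₁ ≠ 0
      · obtain ⟨i₀, hi₀⟩ := he
        rw [Finset.sum_eq_single i₀]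
        · rcases h01 i₀ j₁ with h | h
          · exact absurd h hi₀
          · rw [h, mul_one]; simp only [hw]; rw [if_pos ⟨i₀, hi₀⟩]
        · intro b _ hb
          rcases h01 b j₁ with h | h
          · simp [h]
          · exact absurd (hcol b i₀ j₁ (by simp [h]) hi₀) hb
        · intro h; exact absurd (Finset.mem_univ i₀) h
      · simp only [hw]; rw [if_neg he]
        push_neg at he
        exact Finset.sum_eq_zero fun i _ => by simp [he i]
    · rw [Matrix.diagonal_apply_ne _ h]
      apply Finset.sum_eq_zero
      intro i _
      by_cases h1 : M i j₁ = 0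
      · simp [h1]
      · have : M i j₂ = 0 := by
          by_contra h2
          exact h (hrow i j₁ j₂ h1 h2)
        simp [this]
  have hMD : M * diagonal w = M := by
    ext i j
    rw [Matrix.mul_apply]
    rw [Finset.sum_eq_single j]
    · by_cases he : ∃ i', M i' j ≠ 0
      · simp [hw, he]
      · push_neg at he
        simp [hw, he, he i]
    · intro b _ hb
      rw [Matrix.diagonal_apply_ne _ hb, mul_zero]
    · intro h; exact absurd (Finset.mem_univ j) h
  have h1 : M.rank ≤ (diagonal w).rank := by
    conv_lhs => rw [← hMD]
    exact Matrix.rank_mul_le_right M (diagonal w)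
  have h2 : (diagonal w).rank ≤ M.rank := by
    rw [← hD]
    exact Matrix.rank_mul_le_right Mᵀ M
  rw [le_antisymm h1 h2, Matrix.rank_diagonal, Nat.card_eq_fintype_card]
  apply Fintype.card_congr
  apply Equiv.subtypeEquivRight
  intro j
  simp only [hw]
  by_cases he : ∃ i, M i j ≠ 0 <;> simp [he]

/-! ### Auxiliary lemmas: parabolic matrices -/

open Classical in
/-- The diagonal projection onto the coordinates with `χ j ≥ v`. -/
def Rmat {N : ℕ} (χ : Fin N → ℤ) (v : ℤ) : Matrix (Fin N) (Fin N) ℂ :=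
  diagonal fun j => if v ≤ χ j then 1 else 0

open Classical in
/-- The diagonal projection onto the coordinates with `χ j < v`. -/
def Qmat {N : ℕ} (χ : Fin N → ℤ) (v : ℤ) : Matrix (Fin N) (Fin N) ℂ :=
  diagonal fun j => if v ≤ χ j then 0 else 1

section Parab

variable {N : ℕ} (χ : Fin N → ℤ) (v : ℤ)

open Classical

lemma QR_add : Qmat χ v + Rmat χ v = 1 := by
  rw [Qmat, Rmat, diagonal_add, ← diagonal_one]
  have : (fun i => (if v ≤ χ i then (0:ℂ) else 1) + if v ≤ χ i then 1 else 0) = fun _ => 1 := by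
    funext i; split_ifs <;> ring
  rw [this]

lemma QmulR : Qmat χ v * Rmat χ v = 0 := by
  rw [Qmat, Rmat, diagonal_mul_diagonal]
  have : (fun i => (if v ≤ χ i then (0:ℂ) else 1) * if v ≤ χ i then 1 else 0) = fun _ => 0 := by
    funext i; split_ifs <;> ring
  rw [this, diagonal_zero]

lemma RmulQ : Rmat χ v * Qmat χ v = 0 := by
  rw [Qmat, Rmat, diagonal_mul_diagonal]
  have : (fun i => (if v ≤ χ i then (1:ℂ) else 0) * if v ≤ χ i then 0 else 1) = fun _ => 0 := by
    funext i; split_ifs <;> ring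
  rw [this, diagonal_zero]

lemma QmulQ : Qmat χ v * Qmat χ v = Qmat χ v := by
  rw [Qmat, diagonal_mul_diagonal]
  have : (fun i => (if v ≤ χ i then (0:ℂ) else 1) * if v ≤ χ i then 0 else 1)
      = fun i => if v ≤ χ i then (0:ℂ) else 1 := by
    funext i; split_ifs <;> ring
  rw [this]

lemma RmulR : Rmat χ v * Rmat χ v = Rmat χ v := by
  rw [Rmat, diagonal_mul_diagonal]
  have : (fun i => (if v ≤ χ i then (1:ℂ) else 0) * if v ≤ χ i then 1 else 0)
      = fun i => if v ≤ χ i then (1:ℂ) else 0 := by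
    funext i; split_ifs <;> ring
  rw [this]

variable {χ v}

/-- `R A Q = 0` for parabolic `A`. -/
lemma par_RAQ {A : Matrix (Fin N) (Fin N) ℂ} (hA : InParabolic χ A) :
    Rmat χ v * A * Qmat χ v = 0 := by
  ext k l
  simp only [Rmat, Qmat, Matrix.zero_apply, Matrix.diagonal_mul, Matrix.mul_diagonal]
  by_cases hk : v ≤ χ k
  · by_cases hl : v ≤ χ l
    · simp [hl]
    · rw [hA k l (lt_of_lt_of_le (lt_of_not_ge hl) hk)]; ring
  · simp [hk]

lemma par_gAQ {A : Matrix (Fin N) (Fin N) ℂ} (hA : InParabolic χ A) :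
    A * Qmat χ v = Qmat χ v * A * Qmat χ v := by
  calc A * Qmat χ v = 1 * A * Qmat χ v := by rw [one_mul]
    _ = (Qmat χ v + Rmat χ v) * A * Qmat χ v := by rw [QR_add]
    _ = Qmat χ v * A * Qmat χ v + Rmat χ v * A * Qmat χ v := by rw [add_mul, add_mul]
    _ = Qmat χ v * A * Qmat χ v := by rw [par_RAQ hA, add_zero]

lemma par_RA {A : Matrix (Fin N) (Fin N) ℂ} (hA : InParabolic χ A) :
    Rmat χ v * A = Rmat χ v * A * Rmat χ v := by
  calc Rmat χ v * A = Rmat χ v * A * 1 := by rw [mul_one]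
    _ = Rmat χ v * A * (Qmat χ v + Rmat χ v) := by rw [QR_add]
    _ = Rmat χ v * A * Qmat χ v + Rmat χ v * A * Rmat χ v := by rw [mul_add]
    _ = Rmat χ v * A * Rmat χ v := by rw [par_RAQ hA, zero_add]

/-- The inverse of an invertible parabolic matrix satisfies `R g⁻¹ Q = 0`. -/
lemma par_inv_RAQ (g : GL (Fin N) ℂ) (hg : InParabolic χ (g : Matrix (Fin N) (Fin N) ℂ)) :
    Rmat χ v * (↑g⁻¹ : Matrix (Fin N) (Fin N) ℂ) * Qmat χ v = 0 := by
  set G : Matrix (Fin N) (Fin N) ℂ := ↑g with hGdef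
  set H : Matrix (Fin N) (Fin N) ℂ := ↑g⁻¹ with hHdef
  have hHG : H * G = 1 := by
    rw [hGdef, hHdef, ← Units.val_mul, inv_mul_cancel, Units.val_one]
  set Q := Qmat χ v with hQdef
  set R := Rmat χ v with hRdef
  have hQQ : Q * Q = Q := QmulQ χ v
  have hQR : Q * R = 0 := QmulR χ v
  have hRQ : R * Q = 0 := RmulQ χ v
  have hRR : R * R = R := RmulR χ v
  have hQRone : Q + R = 1 := QR_add χ v
  have hQG : G * Q = Q * G * Q := par_gAQ hg
  have e1 : (Q * H * Q) * (Q * G * Q) = Q := by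
    calc (Q * H * Q) * (Q * G * Q) = Q * H * (Q * Q) * G * Q := by noncomm_ring
      _ = Q * H * Q * G * Q := by rw [hQQ]
      _ = Q * H * (Q * G * Q) := by noncomm_ring
      _ = Q * H * (G * Q) := by rw [← hQG]
      _ = Q * (H * G) * Q := by noncomm_ring
      _ = Q * 1 * Q := by rw [hHG]
      _ = Q := by rw [mul_one, hQQ]
  have e2 : (Q * H * Q) * R = 0 := by
    calc (Q * H * Q) * R = Q * H * (Q * R) := by noncomm_ring
      _ = 0 := by rw [hQR, mul_zero]
  have e3 : R * (Q * G * Q) = 0 := by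
    calc R * (Q * G * Q) = (R * Q) * (G * Q) := by noncomm_ring
      _ = 0 := by rw [hRQ, zero_mul]
  set B : Matrix (Fin N) (Fin N) ℂ := Q * G * Q + R with hB
  have hleft : (Q * H * Q + R) * B = 1 := by
    calc (Q * H * Q + R) * (Q * G * Q + R)
        = (Q * H * Q) * (Q * G * Q) + (Q * H * Q) * R + (R * (Q * G * Q) + R * R) := by
          rw [add_mul, mul_add, mul_add, add_assoc]
      _ = Q + 0 + (0 + R) := by rw [e1, e2, e3, hRR]
      _ = 1 := by rw [add_zero, zero_add, hQRone]
  have hright : B * (Q * H * Q + R) = 1 := mul_eq_one_comm.mp hleft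
  have f1 : (R * H * Q) * (Q * G * Q) = 0 := by
    calc (R * H * Q) * (Q * G * Q) = R * H * (Q * Q) * G * Q := by noncomm_ring
      _ = R * H * Q * G * Q := by rw [hQQ]
      _ = R * H * (Q * G * Q) := by noncomm_ring
      _ = R * H * (G * Q) := by rw [← hQG]
      _ = R * (H * G) * Q := by noncomm_ring
      _ = R * 1 * Q := by rw [hHG]
      _ = 0 := by rw [mul_one, hRQ]
  have f2 : (R * H * Q) * R = 0 := by
    calc (R * H * Q) * R = R * H * (Q * R) := by noncomm_ring
      _ = 0 := by rw [hQR, mul_zero]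
  have hRHQB : (R * H * Q) * B = 0 := by
    rw [hB, mul_add, f1, f2, add_zero]
  calc R * H * Q = (R * H * Q) * 1 := by rw [mul_one]
    _ = (R * H * Q) * (B * (Q * H * Q + R)) := by rw [hright]
    _ = ((R * H * Q) * B) * (Q * H * Q + R) := by simp only [mul_assoc]
    _ = 0 := by rw [hRHQB, zero_mul]

/-- Left multiplication by an invertible parabolic matrix preserves `rank (R * ·)`. -/
lemma rank_R_mul_parabolic {c : ℕ} (g : GL (Fin N) ℂ)
    (hg : InParabolic χ (g : Matrix (Fin N) (Fin N) ℂ)) (M : Matrix (Fin N) (Fin c) ℂ) :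
    (Rmat χ v * (↑g : Matrix (Fin N) (Fin N) ℂ) * M).rank = (Rmat χ v * M).rank := by
  set G : Matrix (Fin N) (Fin N) ℂ := ↑g with hGdef
  set H : Matrix (Fin N) (Fin N) ℂ := ↑g⁻¹ with hHdef
  have hHG : H * G = 1 := by
    rw [hGdef, hHdef, ← Units.val_mul, inv_mul_cancel, Units.val_one]
  set Q := Qmat χ v with hQdef
  set R := Rmat χ v with hRdef
  have hRG : R * G = R * G * R := par_RA hg
  have hRH : R * H = R * H * R := by
    have h0 : R * H * Q = 0 := par_inv_RAQ g hg
    calc R * H = R * H * 1 := by rw [mul_one]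
      _ = R * H * (Q + R) := by rw [QR_add]
      _ = R * H * Q + R * H * R := by rw [mul_add]
      _ = R * H * R := by rw [h0, zero_add]
  apply le_antisymm
  · have key : R * G * M = (R * G) * (R * M) := by
      calc R * G * M = (R * G * R) * M := by rw [← hRG]
        _ = (R * G) * (R * M) := by simp only [Matrix.mul_assoc]
    rw [key]
    exact Matrix.rank_mul_le_right _ _
  · have key : R * M = (R * H) * (R * G * M) := by
      calc R * M = R * (H * G) * M := by rw [hHG, mul_one]
        _ = (R * H) * (G * M) := by simp only [Matrix.mul_assoc]
        _ = (R * H * R) * (G * M) := by rw [← hRH]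
        _ = (R * H) * (R * G * M) := by simp only [Matrix.mul_assoc]
    rw [key]
    exact Matrix.rank_mul_le_right _ _

end Parab

/-! ### Auxiliary lemmas: counting from cumulative counts in a finite poset -/

open Classical in
lemma upper_count_decomp {β : Type*} [PartialOrder β] [Fintype β] {α : Type*} [Fintype α]
    (f : α → β) (t : β) :
    Nat.card {x // t ≤ f x}
      = Nat.card {x // f x = t} + ∑ s ∈ Finset.univ.filter (t < ·), Nat.card {x // f x = s} := by
  classical
  have hcard : ∀ (p : α → Prop), Nat.card {x // p x} = (Finset.univ.filter p).card := by
    intro p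
    rw [Nat.card_eq_fintype_card, Fintype.card_subtype]
  rw [hcard]
  have hmap : ∀ x ∈ Finset.univ.filter (fun x => t ≤ f x), f x ∈ Finset.univ.filter (t ≤ ·) := by
    intro x hx
    simp only [Finset.mem_filter, Finset.mem_univ, true_and] at hx ⊢
    exact hx
  rw [Finset.card_eq_sum_card_fiberwise hmap]
  have hsplit : Finset.univ.filter (t ≤ ·) = insert t (Finset.univ.filter (t < ·)) := by
    ext s
    simp only [Finset.mem_filter, Finset.mem_univ, true_and, Finset.mem_insert]
    constructor
    · intro h
      rcases eq_or_lt_of_le h with h | h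
      · exact Or.inl h.symm
      · exact Or.inr h
    · rintro (rfl | h)
      · exact le_refl _
      · exact le_of_lt h
  rw [hsplit, Finset.sum_insert (by simp)]
  have hfib : ∀ s, t ≤ s →
      ((Finset.univ.filter (fun x => t ≤ f x)).filter (fun x => f x = s)).card
        = Nat.card {x // f x = s} := by
    intro s hs
    rw [hcard]
    congr 1
    ext x
    simp only [Finset.mem_filter, Finset.mem_univ, true_and, and_iff_right_iff_imp]
    intro h; rw [h]; exact hs
  rw [hfib t le_rfl]
  congr 1
  apply Finset.sum_congr rfl
  intro s hs
  simp only [Finset.mem_filter, Finset.mem_univ, true_and] at hs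
  exact hfib s (le_of_lt hs)

lemma fiber_count_of_upper_count {β : Type*} [PartialOrder β] [Fintype β]
    {α α' : Type*} [Fintype α] [Fintype α'] (f : α → β) (g : α' → β)
    (H : ∀ t, Nat.card {x // t ≤ f x} = Nat.card {y // t ≤ g y}) :
    ∀ t, Nat.card {x // f x = t} = Nat.card {y // g y = t} := by
  classical
  suffices key : ∀ n t, (Finset.univ.filter (t < ·)).card = n →
      Nat.card {x // f x = t} = Nat.card {y // g y = t} by
    intro t; exact key _ t rfl
  intro n
  induction n using Nat.strong_induction_on with
  | _ n IH =>
    intro t hn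
    have hsum : ∑ s ∈ Finset.univ.filter (t < ·), Nat.card {x // f x = s}
        = ∑ s ∈ Finset.univ.filter (t < ·), Nat.card {y // g y = s} := by
      apply Finset.sum_congr rfl
      intro s hs
      simp only [Finset.mem_filter, Finset.mem_univ, true_and] at hs
      have hsub : Finset.univ.filter (s < ·) ⊂ Finset.univ.filter (t < ·) := by
        constructor
        · intro r hr
          simp only [Finset.mem_filter, Finset.mem_univ, true_and] at hr ⊢
          exact lt_trans hs hr
        · intro hcon
          have := hcon (by simp [hs] : s ∈ Finset.univ.filter (t < ·))
          simp at this
      exact IH _ (hn ▸ Finset.card_lt_card hsub) s rfl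
    have hf := upper_count_decomp f t
    have hg := upper_count_decomp g t
    rw [H t, hg, hsum] at hf
    omega

lemma equiv_of_fiber_counts {β : Type*} {α α' : Type*} [Finite α] [Finite α']
    (f : α → β) (g : α' → β)
    (H : ∀ t, Nat.card {x // f x = t} = Nat.card {y // g y = t}) :
    ∃ e : α ≃ α', ∀ x, g (e x) = f x := by
  classical
  have e : ∀ t : β, {x // f x = t} ≃ {y // g y = t} := by
    intro t
    have : Nonempty ({x // f x = t} ≃ {y // g y = t}) := by
      haveI : Finite {x // f x = t} := Subtype.finite
      haveI : Finite {y // g y = t} := Subtype.finite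
      exact Finite.card_eq.mp (H t)
    exact this.some
  exact ⟨Equiv.ofFiberEquiv e, fun x => Equiv.ofFiberEquiv_map e x⟩

/-! ### Auxiliary lemmas: the "same block" matrices of a segmentation -/

section Seg

variable {m' : ℕ} {d : Fin (m' + 1) → ℕ}

open Classical in
/-- The "same block" indicator matrix between levels `k` and `l`. -/
def sbm (P : Set (Set (QOmega m' d))) (k l : Fin (m' + 1)) :
    Matrix (Fin (d l)) (Fin (d k)) ℂ :=
  fun j' j =>
    if ∃ S ∈ P, (⟨k, j⟩ : QOmega m' d) ∈ S ∧ (⟨l, j'⟩ : QOmega m' d) ∈ S then 1 else 0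

variable {P : Set (Set (QOmega m' d))}

open Classical in
lemma sbm_apply (P : Set (Set (QOmega m' d))) (k l : Fin (m' + 1))
    (j' : Fin (d l)) (j : Fin (d k)) :
    sbm P k l j' j = (if ∃ S ∈ P, (⟨k, j⟩ : QOmega m' d) ∈ S ∧ (⟨l, j'⟩ : QOmega m' d) ∈ S
      then (1 : ℂ) else 0) := rfl

lemma block_unique (hP : IsSegmentation P) {S S' : Set (QOmega m' d)}
    (hS : S ∈ P) (hS' : S' ∈ P) {x : QOmega m' d} (hx : x ∈ S) (hx' : x ∈ S') : S = S' :=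
  ExistsUnique.unique (hP.2 x) ⟨hS, hx⟩ ⟨hS', hx'⟩

lemma level_eq (hP : IsSegmentation P) {S : Set (QOmega m' d)} (hS : S ∈ P)
    {i : Fin (m' + 1)} {j j' : Fin (d i)}
    (h : (⟨i, j⟩ : QOmega m' d) ∈ S) (h' : (⟨i, j'⟩ : QOmega m' d) ∈ S) : j = j' :=
  (hP.1 S hS).2.1 i j j' h h'

lemma sbm_self (hP : IsSegmentation P) (k : Fin (m' + 1)) : sbm P k k = 1 := by
  classical
  ext j' j
  simp only [sbm_apply, Matrix.one_apply]
  by_cases h : j' = j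
  · subst h
    obtain ⟨S, ⟨hS, hx⟩, -⟩ := hP.2 ⟨k, j'⟩
    rw [if_pos ⟨S, hS, hx, hx⟩, if_pos rfl]
  · rw [if_neg h, if_neg]
    rintro ⟨S, hS, h1, h2⟩
    exact h (level_eq hP hS h2 h1)

set_option maxHeartbeats 1000000 in
lemma sbm_step (hP : IsSegmentation P) {k : Fin (m' + 1)} (i : Fin m')
    (hk : k ≤ i.castSucc) :
    sbm P k i.succ = sbm P i.castSucc i.succ * sbm P k i.castSucc := by
  classical
  ext j'' j
  rw [Matrix.mul_apply]
  simp only [sbm_apply]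
  by_cases h : ∃ S ∈ P, (⟨k, j⟩ : QOmega m' d) ∈ S ∧ (⟨i.succ, j''⟩ : QOmega m' d) ∈ S
  · rw [if_pos h]
    obtain ⟨S, hS, h1, h2⟩ := h
    have hcs : i.castSucc ∈ levelsOf S :=
      (hP.1 S hS).2.2 k i.succ i.castSucc ⟨j, h1⟩ ⟨j'', h2⟩ hk Fin.castSucc_lt_succ.le
    obtain ⟨j', hj'⟩ := hcs
    rw [Finset.sum_eq_single_of_mem j' (Finset.mem_univ j')]
    · rw [if_pos ⟨S, hS, hj', h2⟩, if_pos ⟨S, hS, h1, hj'⟩, one_mul]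
    · intro b _ hb
      by_cases hA : ∃ T ∈ P, (⟨i.castSucc, b⟩ : QOmega m' d) ∈ T ∧
          (⟨i.succ, j''⟩ : QOmega m' d) ∈ T
      · obtain ⟨T, hT, hb1, hb2⟩ := hA
        have hTS : T = S := block_unique hP hT hS hb2 h2
        subst hTS
        exact absurd (level_eq hP hT hb1 hj') hb
      · rw [if_neg hA, zero_mul]
  · rw [if_neg h]
    symm
    apply Finset.sum_eq_zero
    intro b _
    by_cases hA : ∃ T ∈ P, (⟨i.castSucc, b⟩ : QOmega m' d) ∈ T ∧
        (⟨i.succ, j''⟩ : QOmega m' d) ∈ T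
    · by_cases hB : ∃ U ∈ P, (⟨k, j⟩ : QOmega m' d) ∈ U ∧
          (⟨i.castSucc, b⟩ : QOmega m' d) ∈ U
      · obtain ⟨T, hT, hT1, hT2⟩ := hA
        obtain ⟨U, hU, hU1, hU2⟩ := hB
        have hUT : U = T := block_unique hP hU hT hU2 hT1
        subst hUT
        exact absurd ⟨U, hU, hU1, hT2⟩ h
      · rw [if_neg hB, mul_zero]
    · rw [if_neg hA, zero_mul]

lemma segRep_eq_sbm (P : Set (Set (QOmega m' d))) (i : Fin m') :
    segRep P i = sbm P i.castSucc i.succ := by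
  ext j' j
  unfold segRep sbm
  rw [Matrix.of_apply]

lemma sbm_conj {P' : Set (Set (QOmega m' d))} (hP : IsSegmentation P)
    (hP' : IsSegmentation P') (g : QGroup m' d) (hg : qAct g (segRep P) = segRep P') :
    ∀ (t : ℕ) (k l : Fin (m' + 1)), (l : ℕ) = (k : ℕ) + t →
      sbm P' k l = (↑(g l) : Matrix (Fin (d l)) (Fin (d l)) ℂ) * sbm P k l *
        (↑((g k)⁻¹) : Matrix (Fin (d k)) (Fin (d k)) ℂ) := by
  intro t
  induction t with
  | zero =>
    intro k l hl
    have hlk : l = k := Fin.ext (by omega)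
    subst hlk
    rw [sbm_self hP, sbm_self hP', mul_one, ← Units.val_mul, mul_inv_cancel, Units.val_one]
  | succ t IH =>
    intro k l hl
    have hklt : (k : ℕ) + t < m' := by
      have := l.isLt; omega
    set i : Fin m' := ⟨(k : ℕ) + t, hklt⟩ with hi
    have hcs : (i.castSucc : ℕ) = (k : ℕ) + t := rfl
    have hls : l = i.succ := Fin.ext (by simp [Fin.val_succ, hi]; omega)
    subst hls
    have hk : k ≤ i.castSucc := by
      rw [Fin.le_def, hcs]; omega
    rw [sbm_step hP i hk, sbm_step hP' i hk]
    set Gs : Matrix (Fin (d i.succ)) (Fin (d i.succ)) ℂ := ↑(g i.succ) with hGs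
    set Gc : Matrix (Fin (d i.castSucc)) (Fin (d i.castSucc)) ℂ := ↑(g i.castSucc) with hGc
    set Gci : Matrix (Fin (d i.castSucc)) (Fin (d i.castSucc)) ℂ := ↑((g i.castSucc)⁻¹) with hGci
    set Gki : Matrix (Fin (d k)) (Fin (d k)) ℂ := ↑((g k)⁻¹) with hGki
    have hcons := congrFun hg i
    simp only [qAct] at hcons
    rw [segRep_eq_sbm P i, segRep_eq_sbm P' i] at hcons
    replace hcons : sbm P' i.castSucc i.succ = Gs * sbm P i.castSucc i.succ * Gci := hcons.symm
    have hIH : sbm P' k i.castSucc = Gc * sbm P k i.castSucc * Gki := IH k i.castSucc hcs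
    rw [hcons, hIH]
    have hcancel : Gci * Gc = 1 := by
      rw [hGci, hGc, ← Units.val_mul, inv_mul_cancel, Units.val_one]
    calc Gs * sbm P i.castSucc i.succ * Gci * (Gc * sbm P k i.castSucc * Gki)
        = Gs * (sbm P i.castSucc i.succ * ((Gci * Gc) * (sbm P k i.castSucc * Gki))) := by
          simp only [Matrix.mul_assoc]
      _ = Gs * (sbm P i.castSucc i.succ * (sbm P k i.castSucc * Gki)) := by
          rw [hcancel, Matrix.one_mul]
      _ = Gs * (sbm P i.castSucc i.succ * sbm P k i.castSucc) * Gki := by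
          simp only [Matrix.mul_assoc]

open Classical in
/-- The rank of a "flavored same block" matrix counts the blocks through level `k` with a
suitable top. -/
lemma rank_sbm_count (hP : IsSegmentation P)
    (k l : Fin (m' + 1)) (p : Fin (d l) → Prop)
    (M : Matrix (Fin (d l)) (Fin (d k)) ℂ)
    (hM1 : ∀ (j' : Fin (d l)) (j : Fin (d k)),
      ((∃ S ∈ P, (⟨k, j⟩ : QOmega m' d) ∈ S ∧ (⟨l, j'⟩ : QOmega m' d) ∈ S) ∧ p j') → M j' j = 1)
    (hM0 : ∀ (j' : Fin (d l)) (j : Fin (d k)),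
      ¬((∃ S ∈ P, (⟨k, j⟩ : QOmega m' d) ∈ S ∧ (⟨l, j'⟩ : QOmega m' d) ∈ S) ∧ p j') → M j' j = 0) :
    M.rank = Nat.card {S : ↥P // k ∈ levelsOf (S : Set (QOmega m' d)) ∧
        ∃ j' : Fin (d l), (⟨l, j'⟩ : QOmega m' d) ∈ (S : Set (QOmega m' d)) ∧ p j'} := by
  classical
  have hcond : ∀ j' j, M j' j ≠ 0 →
      (∃ S ∈ P, (⟨k, j⟩ : QOmega m' d) ∈ S ∧ (⟨l, j'⟩ : QOmega m' d) ∈ S) ∧ p j' := by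
    intro j' j h
    by_contra hc
    exact h (hM0 j' j hc)
  have h01 : ∀ j' j, M j' j = 0 ∨ M j' j = 1 := by
    intro j' j
    by_cases h : (∃ S ∈ P, (⟨k, j⟩ : QOmega m' d) ∈ S ∧ (⟨l, j'⟩ : QOmega m' d) ∈ S) ∧ p j'
    · right; exact hM1 j' j h
    · left; exact hM0 j' j h
  have hrow : ∀ i j₁ j₂, M i j₁ ≠ 0 → M i j₂ ≠ 0 → j₁ = j₂ := by
    intro j' j₁ j₂ h1 h2
    obtain ⟨⟨S₁, hS₁, ha₁, hb₁⟩, -⟩ := hcond _ _ h1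
    obtain ⟨⟨S₂, hS₂, ha₂, hb₂⟩, -⟩ := hcond _ _ h2
    have hseq : S₁ = S₂ := block_unique hP hS₁ hS₂ hb₁ hb₂
    subst hseq
    exact level_eq hP hS₁ ha₁ ha₂
  have hcol : ∀ i₁ i₂ j, M i₁ j ≠ 0 → M i₂ j ≠ 0 → i₁ = i₂ := by
    intro j₁' j₂' j h1 h2
    obtain ⟨⟨S₁, hS₁, ha₁, hb₁⟩, -⟩ := hcond _ _ h1
    obtain ⟨⟨S₂, hS₂, ha₂, hb₂⟩, -⟩ := hcond _ _ h2
    have hseq : S₁ = S₂ := block_unique hP hS₁ hS₂ ha₁ ha₂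
    subst hseq
    exact level_eq hP hS₁ hb₁ hb₂
  rw [rank_partial_perm M h01 hrow hcol]
  have hex : ∀ j : Fin (d k), (∃ i, M i j ≠ 0) →
      ∃ S, (S ∈ P ∧ (⟨k, j⟩ : QOmega m' d) ∈ S) ∧
        ∃ j' : Fin (d l), (⟨l, j'⟩ : QOmega m' d) ∈ S ∧ p j' := by
    intro j hj
    obtain ⟨j', hj'⟩ := hj
    obtain ⟨⟨S, hS, h1, h2⟩, hp⟩ := hcond j' j hj'
    exact ⟨S, ⟨hS, h1⟩, j', h2, hp⟩
  apply Nat.card_eq_of_bijective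
    (fun x => ⟨⟨(hex x.1 x.2).choose, (hex x.1 x.2).choose_spec.1.1⟩,
      ⟨x.1, (hex x.1 x.2).choose_spec.1.2⟩, (hex x.1 x.2).choose_spec.2⟩)
  constructor
  · rintro ⟨j₁, h₁⟩ ⟨j₂, h₂⟩ heq
    simp only [Subtype.mk.injEq] at heq
    apply Subtype.ext
    have hmem₂ : (⟨k, j₂⟩ : QOmega m' d) ∈ (hex j₁ h₁).choose := by
      rw [heq]
      exact (hex j₂ h₂).choose_spec.1.2
    exact level_eq hP (hex j₁ h₁).choose_spec.1.1 (hex j₁ h₁).choose_spec.1.2 hmem₂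
  · rintro ⟨⟨S, hS⟩, ⟨j, hj⟩, j', hj', hpj'⟩
    have hMne : M j' j ≠ 0 := by
      rw [hM1 j' j ⟨⟨S, hS, hj, hj'⟩, hpj'⟩]
      exact one_ne_zero
    refine ⟨⟨j, j', hMne⟩, ?_⟩
    apply Subtype.ext
    apply Subtype.ext
    exact block_unique hP (hex j ⟨j', hMne⟩).choose_spec.1.1 hS
      (hex j ⟨j', hMne⟩).choose_spec.1.2 hj

lemma levels_nonempty (hP : IsSegmentation P) {S : Set (QOmega m' d)} (hS : S ∈ P) :
    (levelsOf S).Nonempty := by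
  obtain ⟨⟨i, jj⟩, hx⟩ := (hP.1 S hS).1
  exact ⟨i, jj, hx⟩

open Classical in
/-- The flavor of a block: the `χ`-value of its element at the top level, if any. -/
def flav (χ : Fin (d (Fin.last m')) → ℤ) (S : Set (QOmega m' d)) :
    WithBot ↥(Set.range χ) :=
  if h : ∃ j : Fin (d (Fin.last m')), (⟨Fin.last m', j⟩ : QOmega m' d) ∈ S then
    ((⟨χ h.choose, Set.mem_range_self _⟩ : ↥(Set.range χ)) : WithBot ↥(Set.range χ))
  else ⊥

open Classical in
lemma flav_eq_of_mem {χ : Fin (d (Fin.last m')) → ℤ} {S : Set (QOmega m' d)}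
    (huniq : ∀ j j' : Fin (d (Fin.last m')), (⟨Fin.last m', j⟩ : QOmega m' d) ∈ S →
      (⟨Fin.last m', j'⟩ : QOmega m' d) ∈ S → j = j')
    {j : Fin (d (Fin.last m'))} (hj : (⟨Fin.last m', j⟩ : QOmega m' d) ∈ S) :
    flav χ S = ((⟨χ j, Set.mem_range_self _⟩ : ↥(Set.range χ)) : WithBot ↥(Set.range χ)) := by
  have hex : ∃ j : Fin (d (Fin.last m')), (⟨Fin.last m', j⟩ : QOmega m' d) ∈ S := ⟨j, hj⟩
  rw [flav, dif_pos hex]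
  have h := huniq hex.choose j hex.choose_spec hj
  congr 1
  exact Subtype.ext (congrArg χ h)

open Classical in
lemma flav_le_iff {χ : Fin (d (Fin.last m')) → ℤ} {S : Set (QOmega m' d)}
    (huniq : ∀ j j' : Fin (d (Fin.last m')), (⟨Fin.last m', j⟩ : QOmega m' d) ∈ S →
      (⟨Fin.last m', j'⟩ : QOmega m' d) ∈ S → j = j')
    (v : ↥(Set.range χ)) :
    ((v : WithBot ↥(Set.range χ)) ≤ flav χ S) ↔
      ∃ j : Fin (d (Fin.last m')), (⟨Fin.last m', j⟩ : QOmega m' d) ∈ S ∧ (v : ℤ) ≤ χ j := by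
  rw [flav]
  split_ifs with h
  · constructor
    · intro hle
      rw [WithBot.coe_le_coe] at hle
      exact ⟨h.choose, h.choose_spec, hle⟩
    · rintro ⟨j, hj, hle⟩
      rw [WithBot.coe_le_coe]
      have hjj : h.choose = j := huniq _ _ h.choose_spec hj
      show (v : ℤ) ≤ χ h.choose
      rw [hjj]
      exact hle
  · constructor
    · intro hle
      exact absurd hle (WithBot.not_coe_le_bot _)
    · rintro ⟨j, hj, -⟩
      exact absurd ⟨j, hj⟩ h

/-- The type invariant attached to a block: its set of levels and its flavor. -/
def tauFun (χ : Fin (d (Fin.last m')) → ℤ) (P : Set (Set (QOmega m' d)))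
    (hP : IsSegmentation P) :
    ↥P → {T : Set (Fin (m' + 1)) // T.Nonempty} × WithBot ↥(Set.range χ) :=
  fun S => (⟨levelsOf (S : Set (QOmega m' d)), levels_nonempty hP S.2⟩, flav χ (S : Set (QOmega m' d)))

end Seg

/-- If the points `f_Σ`, `f_{Σ'}` associated to two segmentations of `Ω` lie in the same
`G_χ`-orbit on `V`, then the segmentations have the same `χ`-flavored multisegment. -/
theorem sameOrbit_implies_sameMultisegment (m' : ℕ) (hm : 1 ≤ m') (d : Fin (m' + 1) → ℕ)
    (χ : Fin (d (Fin.last m')) → ℤ) (hχ : Monotone χ)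
    (P P' : Set (Set (QOmega m' d)))
    (hP : IsSegmentation P) (hP' : IsSegmentation P')
    (horb : SameOrbit χ (segRep P) (segRep P')) :
    SameMultisegment χ P P' := by
  classical
  obtain ⟨g, hpar, hg⟩ := horb
  haveI : Finite ↥(Set.range χ) := (Set.finite_range χ).to_subtype
  haveI : Finite (WithBot ↥(Set.range χ)) :=
    inferInstanceAs (Finite (Option ↥(Set.range χ)))
  haveI : Fintype ({T : Set (Fin (m' + 1)) // T.Nonempty} × WithBot ↥(Set.range χ)) :=
    Fintype.ofFinite _
  haveI : Fintype ↥P := Fintype.ofFinite _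
  haveI : Fintype ↥P' := Fintype.ofFinite _
  have hunit : ∀ (n : ℕ) (A : GL (Fin n) ℂ),
      IsUnit ((A : Matrix (Fin n) (Fin n) ℂ)).det := by
    intro n A
    exact (Matrix.isUnit_iff_isUnit_det _).mp A.isUnit
  have hupper : ∀ t, Nat.card {S : ↥P // t ≤ tauFun χ P hP S}
      = Nat.card {S' : ↥P' // t ≤ tauFun χ P' hP' S'} := by
    rintro ⟨⟨T, hT⟩, c⟩
    obtain ⟨k, hkT, hkmin⟩ := Set.exists_min_image T id (Set.toFinite T) hT
    obtain ⟨l, hlT, hlmax⟩ := Set.exists_max_image T id (Set.toFinite T) hT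
    simp only [id] at hkmin hlmax
    have hkl : k ≤ l := hkmin l hlT
    have hsub : ∀ (Pa : Set (Set (QOmega m' d))), IsSegmentation Pa → ∀ S ∈ Pa,
        (T ⊆ levelsOf S ↔ k ∈ levelsOf S ∧ l ∈ levelsOf S) := by
      intro Pa hPa S hS
      constructor
      · intro h; exact ⟨h hkT, h hlT⟩
      · rintro ⟨h1, h2⟩ x hx
        exact (hPa.1 S hS).2.2 k l x h1 h2 (hkmin x hx) (hlmax x hx)
    induction c using WithBot.recBotCoe with
    | bot =>
      have hMM1 : ∀ (Pa : Set (Set (QOmega m' d))) (j' : Fin (d l)) (j : Fin (d k)),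
          ((∃ S ∈ Pa, (⟨k, j⟩ : QOmega m' d) ∈ S ∧ (⟨l, j'⟩ : QOmega m' d) ∈ S) ∧ True)
            → sbm Pa k l j' j = 1 := by
        rintro Pa j' j ⟨hC, -⟩
        rw [sbm_apply, if_pos hC]
      have hMM0 : ∀ (Pa : Set (Set (QOmega m' d))) (j' : Fin (d l)) (j : Fin (d k)),
          ¬((∃ S ∈ Pa, (⟨k, j⟩ : QOmega m' d) ∈ S ∧ (⟨l, j'⟩ : QOmega m' d) ∈ S) ∧ True)
            → sbm Pa k l j' j = 0 := by
        intro Pa j' j h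
        rw [sbm_apply, if_neg]
        intro hC
        exact h ⟨hC, trivial⟩
      have e1 : Nat.card {S : ↥P // (⟨⟨T, hT⟩, (⊥ : WithBot ↥(Set.range χ))⟩ :
            {T : Set (Fin (m' + 1)) // T.Nonempty} × WithBot ↥(Set.range χ)) ≤ tauFun χ P hP S}
          = Nat.card {S : ↥P // k ∈ levelsOf (S : Set (QOmega m' d)) ∧
              ∃ j' : Fin (d l), (⟨l, j'⟩ : QOmega m' d) ∈ (S : Set (QOmega m' d)) ∧ True} := by
        apply Nat.card_congr
        apply Equiv.subtypeEquivRight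
        intro S
        simp only [tauFun, Prod.mk_le_mk, Subtype.mk_le_mk, Set.le_eq_subset]
        rw [hsub P hP (S : Set (QOmega m' d)) S.2]
        constructor
        · rintro ⟨⟨h1, h2⟩, -⟩
          obtain ⟨j', hj'⟩ := h2
          exact ⟨h1, j', hj', trivial⟩
        · rintro ⟨h1, j', hj', -⟩
          exact ⟨⟨h1, j', hj'⟩, bot_le⟩
      have e1' : Nat.card {S : ↥P' // (⟨⟨T, hT⟩, (⊥ : WithBot ↥(Set.range χ))⟩ :
            {T : Set (Fin (m' + 1)) // T.Nonempty} × WithBot ↥(Set.range χ)) ≤ tauFun χ P' hP' S}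
          = Nat.card {S : ↥P' // k ∈ levelsOf (S : Set (QOmega m' d)) ∧
              ∃ j' : Fin (d l), (⟨l, j'⟩ : QOmega m' d) ∈ (S : Set (QOmega m' d)) ∧ True} := by
        apply Nat.card_congr
        apply Equiv.subtypeEquivRight
        intro S
        simp only [tauFun, Prod.mk_le_mk, Subtype.mk_le_mk, Set.le_eq_subset]
        rw [hsub P' hP' (S : Set (QOmega m' d)) S.2]
        constructor
        · rintro ⟨⟨h1, h2⟩, -⟩
          obtain ⟨j', hj'⟩ := h2
          exact ⟨h1, j', hj', trivial⟩
        · rintro ⟨h1, j', hj', -⟩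
          exact ⟨⟨h1, j', hj'⟩, bot_le⟩
      rw [e1, e1',
        ← rank_sbm_count hP k l (fun _ => True) (sbm P k l) (hMM1 P) (hMM0 P),
        ← rank_sbm_count hP' k l (fun _ => True) (sbm P' k l) (hMM1 P') (hMM0 P')]
      have hconj := sbm_conj hP hP' g hg ((l : ℕ) - (k : ℕ)) k l (by omega)
      rw [hconj, Matrix.rank_mul_eq_left_of_isUnit_det _ _ (hunit _ ((g k)⁻¹)),
        Matrix.rank_mul_eq_right_of_isUnit_det _ _ (hunit _ (g l))]
    | coe v =>
      have hlast : ((Fin.last m' : Fin (m' + 1)) : ℕ) = m' := rfl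
      have hMM1 : ∀ (Pa : Set (Set (QOmega m' d))) (j' : Fin (d (Fin.last m')))
          (j : Fin (d k)),
          ((∃ S ∈ Pa, (⟨k, j⟩ : QOmega m' d) ∈ S ∧
              (⟨Fin.last m', j'⟩ : QOmega m' d) ∈ S) ∧ ((v : ℤ) ≤ χ j'))
            → (Rmat χ (v : ℤ) * sbm Pa k (Fin.last m')) j' j = 1 := by
        rintro Pa j' j ⟨hC, hv⟩
        rw [Rmat, Matrix.diagonal_mul, sbm_apply, if_pos hv, if_pos hC, one_mul]
      have hMM0 : ∀ (Pa : Set (Set (QOmega m' d))) (j' : Fin (d (Fin.last m')))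
          (j : Fin (d k)),
          ¬((∃ S ∈ Pa, (⟨k, j⟩ : QOmega m' d) ∈ S ∧
              (⟨Fin.last m', j'⟩ : QOmega m' d) ∈ S) ∧ ((v : ℤ) ≤ χ j'))
            → (Rmat χ (v : ℤ) * sbm Pa k (Fin.last m')) j' j = 0 := by
        intro Pa j' j h
        rw [Rmat, Matrix.diagonal_mul, sbm_apply]
        by_cases hv : (v : ℤ) ≤ χ j'
        · by_cases hC : ∃ S ∈ Pa, (⟨k, j⟩ : QOmega m' d) ∈ S ∧
              (⟨Fin.last m', j'⟩ : QOmega m' d) ∈ S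
          · exact absurd ⟨hC, hv⟩ h
          · rw [if_pos hv, if_neg hC, one_mul]
        · rw [if_neg hv, zero_mul]
      have e2 : Nat.card {S : ↥P // (⟨⟨T, hT⟩, (v : WithBot ↥(Set.range χ))⟩ :
            {T : Set (Fin (m' + 1)) // T.Nonempty} × WithBot ↥(Set.range χ)) ≤ tauFun χ P hP S}
          = Nat.card {S : ↥P // k ∈ levelsOf (S : Set (QOmega m' d)) ∧
              ∃ j' : Fin (d (Fin.last m')),
                (⟨Fin.last m', j'⟩ : QOmega m' d) ∈ (S : Set (QOmega m' d)) ∧ (v : ℤ) ≤ χ j'} := by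
        apply Nat.card_congr
        apply Equiv.subtypeEquivRight
        intro S
        have huniq : ∀ j j' : Fin (d (Fin.last m')),
            (⟨Fin.last m', j⟩ : QOmega m' d) ∈ (S : Set (QOmega m' d)) →
            (⟨Fin.last m', j'⟩ : QOmega m' d) ∈ (S : Set (QOmega m' d)) → j = j' :=
          fun j j' hj hj' => level_eq hP S.2 hj hj'
        simp only [tauFun, Prod.mk_le_mk, Subtype.mk_le_mk, Set.le_eq_subset]
        rw [hsub P hP (S : Set (QOmega m' d)) S.2, flav_le_iff huniq v]
        constructor
        · rintro ⟨⟨h1, -⟩, j', hj', hv⟩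
          exact ⟨h1, j', hj', hv⟩
        · rintro ⟨h1, j', hj', hv⟩
          have hlastmem : Fin.last m' ∈ levelsOf (S : Set (QOmega m' d)) := ⟨j', hj'⟩
          have hlmem : l ∈ levelsOf (S : Set (QOmega m' d)) :=
            (hP.1 (S : Set (QOmega m' d)) S.2).2.2 k (Fin.last m') l h1 hlastmem hkl
              (Fin.le_last l)
          exact ⟨⟨h1, hlmem⟩, j', hj', hv⟩
      have e2' : Nat.card {S : ↥P' // (⟨⟨T, hT⟩, (v : WithBot ↥(Set.range χ))⟩ :
            {T : Set (Fin (m' + 1)) // T.Nonempty} × WithBot ↥(Set.range χ)) ≤ tauFun χ P' hP' S}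
          = Nat.card {S : ↥P' // k ∈ levelsOf (S : Set (QOmega m' d)) ∧
              ∃ j' : Fin (d (Fin.last m')),
                (⟨Fin.last m', j'⟩ : QOmega m' d) ∈ (S : Set (QOmega m' d)) ∧ (v : ℤ) ≤ χ j'} := by
        apply Nat.card_congr
        apply Equiv.subtypeEquivRight
        intro S
        have huniq : ∀ j j' : Fin (d (Fin.last m')),
            (⟨Fin.last m', j⟩ : QOmega m' d) ∈ (S : Set (QOmega m' d)) →
            (⟨Fin.last m', j'⟩ : QOmega m' d) ∈ (S : Set (QOmega m' d)) → j = j' :=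
          fun j j' hj hj' => level_eq hP' S.2 hj hj'
        simp only [tauFun, Prod.mk_le_mk, Subtype.mk_le_mk, Set.le_eq_subset]
        rw [hsub P' hP' (S : Set (QOmega m' d)) S.2, flav_le_iff huniq v]
        constructor
        · rintro ⟨⟨h1, -⟩, j', hj', hv⟩
          exact ⟨h1, j', hj', hv⟩
        · rintro ⟨h1, j', hj', hv⟩
          have hlastmem : Fin.last m' ∈ levelsOf (S : Set (QOmega m' d)) := ⟨j', hj'⟩
          have hlmem : l ∈ levelsOf (S : Set (QOmega m' d)) :=
            (hP'.1 (S : Set (QOmega m' d)) S.2).2.2 k (Fin.last m') l h1 hlastmem hkl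
              (Fin.le_last l)
          exact ⟨⟨h1, hlmem⟩, j', hj', hv⟩
      rw [e2, e2',
        ← rank_sbm_count hP k (Fin.last m') (fun j' => (v : ℤ) ≤ χ j')
          (Rmat χ (v : ℤ) * sbm P k (Fin.last m')) (hMM1 P) (hMM0 P),
        ← rank_sbm_count hP' k (Fin.last m') (fun j' => (v : ℤ) ≤ χ j')
          (Rmat χ (v : ℤ) * sbm P' k (Fin.last m')) (hMM1 P') (hMM0 P')]
      have hconj := sbm_conj hP hP' g hg (m' - (k : ℕ)) k (Fin.last m')
        (by rw [hlast]; omega)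
      rw [hconj]
      have hassoc : Rmat χ (v : ℤ) *
            ((↑(g (Fin.last m')) : Matrix (Fin (d (Fin.last m'))) (Fin (d (Fin.last m'))) ℂ) *
              sbm P k (Fin.last m') * (↑((g k)⁻¹) : Matrix (Fin (d k)) (Fin (d k)) ℂ))
          = (Rmat χ (v : ℤ) *
              (↑(g (Fin.last m')) : Matrix (Fin (d (Fin.last m'))) (Fin (d (Fin.last m'))) ℂ) *
              sbm P k (Fin.last m')) *
            (↑((g k)⁻¹) : Matrix (Fin (d k)) (Fin (d k)) ℂ) := by
        simp only [Matrix.mul_assoc]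
      rw [hassoc, Matrix.rank_mul_eq_left_of_isUnit_det _ _ (hunit _ ((g k)⁻¹)),
        rank_R_mul_parabolic (g (Fin.last m')) hpar (sbm P k (Fin.last m'))]
  have hfib := fiber_count_of_upper_count (tauFun χ P hP) (tauFun χ P' hP') hupper
  obtain ⟨e, he⟩ := equiv_of_fiber_counts (tauFun χ P hP) (tauFun χ P' hP') hfib
  refine ⟨e, fun S => ⟨?_, ?_⟩⟩
  · exact (congrArg (fun x => (x.1 : Set (Fin (m' + 1)))) (he S)).symm
  · intro j j' hj hj'
    have h2 : flav χ ((e S : Set (QOmega m' d))) = flav χ (S : Set (QOmega m' d)) :=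
      congrArg Prod.snd (he S)
    have huS : ∀ a b : Fin (d (Fin.last m')),
        (⟨Fin.last m', a⟩ : QOmega m' d) ∈ (S : Set (QOmega m' d)) →
        (⟨Fin.last m', b⟩ : QOmega m' d) ∈ (S : Set (QOmega m' d)) → a = b :=
      fun a b ha hb => level_eq hP S.2 ha hb
    have huS' : ∀ a b : Fin (d (Fin.last m')),
        (⟨Fin.last m', a⟩ : QOmega m' d) ∈ ((e S : Set (QOmega m' d))) →
        (⟨Fin.last m', b⟩ : QOmega m' d) ∈ ((e S : Set (QOmega m' d))) → a = b :=
      fun a b ha hb => level_eq hP' (e S).2 ha hb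
    rw [flav_eq_of_mem huS' hj', flav_eq_of_mem huS hj] at h2
    have h3 := WithBot.coe_inj.mp h2
    exact (congrArg Subtype.val h3).symm

end
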